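/- Let M be a symmetric d×d matrix whose entries are real homogeneous polynomials of degree two in x₀, x₁, x₂, and let F = det(M). Suppose the real zero set of F in ℝ³ ∖ {0} is contained in a finite union of lines through the origin, and suppose there exists a₀ ∈ ℝ³ such that M(a₀) is positive definite. Then M(a) is positive semidefinite for every a ∈ ℝ³; i.e., M is a positive quadratic representation of F. -/

import Mathlib

open MvPolynomial Matrix

noncomputable section

section Aux

/-- A positive semidefinite real matrix with nonzero determinant is positive definite. -/
lemma aux_psd_pd {d : ℕ} {A : Matrix (Fin d) (Fin d) ℝ} (h : A.PosSemidef)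
    (hdet : A.det ≠ 0) : A.PosDef := by
  refine posDef_iff_dotProduct_mulVec.mpr ⟨h.1, fun x hx => ?_⟩
  rcases ((posSemidef_iff_dotProduct_mulVec.mp h).2 x).lt_or_eq with hlt | heq
  · exact hlt
  · exfalso
    have hAx : A *ᵥ x = 0 := (h.dotProduct_mulVec_zero_iff x).mp heq.symm
    have hinj : Function.Injective (A.mulVec) :=
      Matrix.mulVec_injective_iff_isUnit.mpr
        ((Matrix.isUnit_iff_isUnit_det A).mpr (isUnit_iff_ne_zero.mpr hdet))
    exact hx (hinj (by simpa using hAx))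

lemma aux_ne_top (s : Submodule ℝ (Fin 3 → ℝ)) (hs : Module.finrank ℝ s ≤ 2) :
    s ≠ ⊤ := by
  intro h
  have h3 : Module.finrank ℝ (⊤ : Submodule ℝ (Fin 3 → ℝ)) = 3 := by
    rw [finrank_top, Module.finrank_fin_fun]
  rw [h] at hs
  omega

lemma aux_finrank_span_singleton_le (v : Fin 3 → ℝ) :
    Module.finrank ℝ (ℝ ∙ v) ≤ 1 := by
  rcases eq_or_ne v 0 with h | h
  · rw [h, Submodule.span_zero_singleton]
    simp
  · exact le_of_eq (finrank_span_singleton h)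

lemma aux_finrank_sup_le (s t : Submodule ℝ (Fin 3 → ℝ))
    (hs : Module.finrank ℝ s ≤ 1) (ht : Module.finrank ℝ t ≤ 1) :
    Module.finrank ℝ (s ⊔ t : Submodule ℝ (Fin 3 → ℝ)) ≤ 2 := by
  have := Submodule.finrank_sup_add_finrank_inf_eq s t
  omega

/-- The complement of a finite (countable) union of proper subspaces of `ℝ³` is dense. -/
lemma aux_dense_compl {ι : Type*} [Countable ι] (W : ι → Submodule ℝ (Fin 3 → ℝ))
    (hW : ∀ i, W i ≠ ⊤) : Dense (⋃ i, (W i : Set (Fin 3 → ℝ)))ᶜ := by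
  rw [Set.compl_iUnion]
  refine dense_iInter_of_isOpen (fun i => (W i).closed_of_finiteDimensional.isOpen_compl)
    (fun i => ?_)
  rw [← interior_eq_empty_iff_dense_compl]
  by_contra h
  exact hW i (Submodule.eq_top_of_nonempty_interior' _ (Set.nonempty_iff_ne_empty.mpr h))

end Aux

/-- Let `M` be a symmetric matrix of real homogeneous quadratic forms with `F = det M`.  If the
real zero set of `F` in `ℝ³ ∖ {0}` is contained in a finite union of lines through the origin,
and `M` is positive definite at some real point, then `M` is positive semidefinite at every
real point, i.e. `M` is a positive quadratic representation of `F`. -/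
theorem posSemidef_everywhere_of_posDef_somewhere
    (d : ℕ) (M : Matrix (Fin d) (Fin d) (MvPolynomial (Fin 3) ℝ))
    (hsymm : M.IsSymm)
    (hhom : ∀ i j, (M i j).IsHomogeneous 2)
    (hlines : ∃ (m : ℕ) (v : Fin m → (Fin 3 → ℝ)),
      ∀ a : Fin 3 → ℝ, a ≠ 0 → MvPolynomial.eval a M.det = 0 →
        ∃ (i : Fin m) (t : ℝ), a = t • v i)
    (hpd : ∃ a₀ : Fin 3 → ℝ, (M.map (MvPolynomial.eval a₀)).PosDef) :
    ∀ a : Fin 3 → ℝ, (M.map (MvPolynomial.eval a)).PosSemidef := by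
  classical
  obtain ⟨m, v, hv⟩ := hlines
  obtain ⟨a₀, ha₀⟩ := hpd
  -- the quadratic form evaluated at a point
  set q : (Fin 3 → ℝ) → (Fin d → ℝ) → ℝ :=
    fun a x => x ⬝ᵥ ((M.map (MvPolynomial.eval a)) *ᵥ x) with hq
  -- continuity of the quadratic form jointly in (a, x)
  have fc : Continuous fun p : (Fin 3 → ℝ) × (Fin d → ℝ) => q p.1 p.2 := by
    simp only [hq, dotProduct, Matrix.mulVec, Matrix.map_apply]
    exact continuous_finset_sum _ fun i _ =>
      ((continuous_apply i).comp continuous_snd).mul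
        (continuous_finset_sum _ fun j _ =>
          ((MvPolynomial.continuous_eval (M i j)).comp continuous_fst).mul
            ((continuous_apply j).comp continuous_snd))
  have qc : ∀ x : Fin d → ℝ, Continuous fun a => q a x := fun x =>
    fc.comp (continuous_id.prodMk continuous_const)
  -- all evaluated matrices are Hermitian
  have herm : ∀ a : Fin 3 → ℝ, (M.map (MvPolynomial.eval a)).IsHermitian := by
    intro a
    ext i j
    simp only [Matrix.conjTranspose_apply, Matrix.map_apply, star_trivial]
    have := congrFun (congrFun hsymm i) j
    simp only [Matrix.transpose_apply] at this
    rw [this]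
  -- positive definiteness in terms of q
  have pd_iff : ∀ a : Fin 3 → ℝ,
      (M.map (MvPolynomial.eval a)).PosDef ↔ ∀ x : Fin d → ℝ, x ≠ 0 → 0 < q a x := by
    intro a
    constructor
    · intro h x hx
      simpa [hq, star_trivial] using (posDef_iff_dotProduct_mulVec.mp h).2 hx
    · intro h
      exact posDef_iff_dotProduct_mulVec.mpr ⟨herm a, fun x hx => by simpa [hq, star_trivial] using h x hx⟩
  -- the set of points where M is positive definite is open
  have hPDopen : IsOpen {a : Fin 3 → ℝ | (M.map (MvPolynomial.eval a)).PosDef} := by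
    rw [isOpen_iff_mem_nhds]
    intro a ha
    have hK : IsCompact (Metric.sphere (0 : Fin d → ℝ) 1) := isCompact_sphere 0 1
    have hev : ∀ᶠ a' in nhds a, ∀ x ∈ Metric.sphere (0 : Fin d → ℝ) 1, 0 < q a' x := by
      refine hK.eventually_forall_of_forall_eventually (fun x hx => ?_)
      have hx0 : x ≠ 0 := by
        have := mem_sphere_zero_iff_norm.mp hx
        intro h; rw [h] at this; simp at this
      have : 0 < q a x := (pd_iff a).mp ha x hx0
      have hopen : IsOpen {p : (Fin 3 → ℝ) × (Fin d → ℝ) | 0 < q p.1 p.2} :=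
        isOpen_lt continuous_const fc
      exact hopen.eventually_mem this
    refine Filter.mem_of_superset hev (fun a' ha' => ?_)
    refine (pd_iff a').mpr (fun x hx => ?_)
    have hc : 0 < ‖x‖ := norm_pos_iff.mpr hx
    have hu : (‖x‖⁻¹ • x) ∈ Metric.sphere (0 : Fin d → ℝ) 1 := by
      rw [mem_sphere_zero_iff_norm, norm_smul, norm_inv, norm_norm]
      field_simp
    have h2 : 0 < q a' (‖x‖⁻¹ • x) := ha' _ hu
    have h3 : q a' (‖x‖⁻¹ • x) = ‖x‖⁻¹ * (‖x‖⁻¹ * q a' x) := by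
      simp only [hq, Matrix.mulVec_smul, smul_dotProduct, dotProduct_smul,
        smul_eq_mul]
    rw [h3] at h2
    nlinarith [h2, mul_pos (inv_pos.mpr hc) (inv_pos.mpr hc)]
  -- the set of points where the form is somewhere negative is open
  have hNopen : IsOpen {a : Fin 3 → ℝ | ∃ x : Fin d → ℝ, q a x < 0} := by
    have : {a : Fin 3 → ℝ | ∃ x : Fin d → ℝ, q a x < 0}
        = ⋃ x : Fin d → ℝ, {a | q a x < 0} := by
      ext a; simp [Set.mem_iUnion]
    rw [this]
    exact isOpen_iUnion fun x => isOpen_lt (qc x) continuous_const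
  -- transport of positive definiteness along a segment where det is nonzero
  have transport : ∀ p₁ p₂ : Fin 3 → ℝ,
      (∀ t ∈ Set.Icc (0:ℝ) 1, (M.map (MvPolynomial.eval ((1-t) • p₁ + t • p₂))).det ≠ 0) →
      (M.map (MvPolynomial.eval p₁)).PosDef → (M.map (MvPolynomial.eval p₂)).PosDef := by
    intro p₁ p₂ hdet hp₁
    set γ : ℝ → (Fin 3 → ℝ) := fun t => (1-t) • p₁ + t • p₂ with hγ
    have hγc : Continuous γ := by
      exact ((continuous_const.sub continuous_id).smul continuous_const).add
        (continuous_id.smul continuous_const)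
    set U : Set ℝ := γ ⁻¹' {a | (M.map (MvPolynomial.eval a)).PosDef} with hU
    set V : Set ℝ := γ ⁻¹' {a | ∃ x : Fin d → ℝ, q a x < 0} with hV
    have hUo : IsOpen U := hPDopen.preimage hγc
    have hVo : IsOpen V := hNopen.preimage hγc
    have hcover : Set.Icc (0:ℝ) 1 ⊆ U ∪ V := by
      intro t ht
      by_cases hVt : ∃ x : Fin d → ℝ, q (γ t) x < 0
      · exact Or.inr hVt
      · left
        push_neg at hVt
        have hpsd : (M.map (MvPolynomial.eval (γ t))).PosSemidef :=
          posSemidef_iff_dotProduct_mulVec.mpr ⟨herm _, fun x => by simpa [hq, star_trivial] using hVt x⟩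
        exact aux_psd_pd hpsd (hdet t ht)
    have hU0 : (Set.Icc (0:ℝ) 1 ∩ U).Nonempty := by
      refine ⟨0, Set.mem_Icc.mpr ⟨le_refl 0, zero_le_one⟩, ?_⟩
      have hg0 : γ 0 = p₁ := by simp [hγ]
      show γ 0 ∈ {a | (M.map (MvPolynomial.eval a)).PosDef}
      rw [hg0]; exact hp₁
    by_contra hcon
    have h1V : (Set.Icc (0:ℝ) 1 ∩ V).Nonempty := by
      refine ⟨1, Set.mem_Icc.mpr ⟨zero_le_one, le_refl 1⟩, ?_⟩
      have h1 : γ 1 = p₂ := by simp [hγ]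
      have := hcover (Set.mem_Icc.mpr ⟨zero_le_one, le_refl (1:ℝ)⟩)
      rcases this with h | h
      · refine absurd ?_ hcon
        have h' : γ 1 ∈ {a | (M.map (MvPolynomial.eval a)).PosDef} := h
        rwa [h1] at h'
      · exact h
    obtain ⟨t, _, htU, htV⟩ := isPreconnected_Icc U V hUo hVo hcover hU0 h1V
    obtain ⟨x, hx⟩ := htV
    have hx0 : x ≠ 0 := by
      intro h
      rw [h] at hx
      simp [hq] at hx
    have := (pd_iff (γ t)).mp htU x hx0
    linarith
  -- the union of the lines (and the origin)
  set L : Fin (m+1) → Submodule ℝ (Fin 3 → ℝ) :=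
    Fin.cons ⊥ (fun i => ℝ ∙ (v i)) with hL
  set S : Set (Fin 3 → ℝ) := ⋃ i, (L i : Set (Fin 3 → ℝ)) with hS
  have hLne : ∀ i, L i ≠ ⊤ := by
    intro i
    refine aux_ne_top _ ?_
    induction i using Fin.cases with
    | zero =>
      rw [hL, Fin.cons_zero]
      simp
    | succ i =>
      rw [hL, Fin.cons_succ]
      exact (aux_finrank_span_singleton_le (v i)).trans one_le_two
  have hSdense : Dense Sᶜ := aux_dense_compl L hLne
  have h0S : (0 : Fin 3 → ℝ) ∈ S := by
    refine Set.mem_iUnion.mpr ⟨0, ?_⟩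
    rw [hL, Fin.cons_zero]
    exact Submodule.zero_mem ⊥
  have hSdet : ∀ p : Fin 3 → ℝ, p ∉ S → (M.map (MvPolynomial.eval p)).det ≠ 0 := by
    intro p hp hdet
    have hp0 : p ≠ 0 := fun h => hp (h ▸ h0S)
    have hdet' : MvPolynomial.eval p M.det = 0 := by
      rw [RingHom.map_det, RingHom.mapMatrix_apply]
      exact hdet
    obtain ⟨i, t, hti⟩ := hv p hp0 hdet'
    refine hp (Set.mem_iUnion.mpr ⟨i.succ, ?_⟩)
    rw [hL, Fin.cons_succ, hti]
    exact Submodule.smul_mem _ t (Submodule.mem_span_singleton_self (v i))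
  -- a positive definite point off the lines
  obtain ⟨a₁, ha₁S, ha₁⟩ : ∃ a₁, a₁ ∈ Sᶜ ∧ (M.map (MvPolynomial.eval a₁)).PosDef := by
    obtain ⟨x, hx1, hx2⟩ := hSdense.exists_mem_open hPDopen ⟨a₀, ha₀⟩
    exact ⟨x, hx1, hx2⟩
  -- segments avoiding S
  have seg_avoid : ∀ (c b : Fin 3 → ℝ), c ∉ S →
      (∀ j, b ∉ ((ℝ ∙ c) ⊔ L j : Submodule ℝ (Fin 3 → ℝ))) →
      ∀ t ∈ Set.Icc (0:ℝ) 1, (1-t) • c + t • b ∉ S := by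
    intro c b hc hb t _ hmem
    obtain ⟨j, hj⟩ := Set.mem_iUnion.mp hmem
    rcases eq_or_ne t 0 with ht0 | ht0
    · rw [ht0] at hj
      simp only [sub_zero, one_smul, zero_smul, add_zero] at hj
      exact hc (Set.mem_iUnion.mpr ⟨j, hj⟩)
    · refine hb j ?_
      have hx : ((1-t) • c + t • b) ∈ (ℝ ∙ c) ⊔ L j :=
        Submodule.mem_sup_right hj
      have hcmem : c ∈ (ℝ ∙ c) ⊔ L j :=
        Submodule.mem_sup_left (Submodule.mem_span_singleton_self c)
      have htb : t • b ∈ (ℝ ∙ c) ⊔ L j := by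
        have := Submodule.sub_mem _ hx (Submodule.smul_mem _ (1-t) hcmem)
        simpa [add_sub_cancel_left] using this
      have : b = t⁻¹ • (t • b) := by
        rw [smul_smul, inv_mul_cancel₀ ht0, one_smul]
      rw [this]
      exact Submodule.smul_mem _ _ htb
  -- M is positive definite everywhere off S
  have hPD : ∀ p : Fin 3 → ℝ, p ∉ S → (M.map (MvPolynomial.eval p)).PosDef := by
    intro p hp
    -- choose an auxiliary point b avoiding all relevant planes
    set W : Fin (m+1) ⊕ Fin (m+1) → Submodule ℝ (Fin 3 → ℝ) :=
      Sum.elim (fun j => (ℝ ∙ a₁) ⊔ L j) (fun j => (ℝ ∙ p) ⊔ L j) with hW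
    have hWne : ∀ i, W i ≠ ⊤ := by
      rintro (j | j)
      all_goals {
        refine aux_ne_top _ (aux_finrank_sup_le _ _ (aux_finrank_span_singleton_le _) ?_)
        induction j using Fin.cases with
        | zero =>
          rw [hL, Fin.cons_zero]
          simp
        | succ i =>
          rw [hL, Fin.cons_succ]
          exact aux_finrank_span_singleton_le (v i)
      }
    obtain ⟨b, hb⟩ : ∃ b, b ∈ (⋃ i, (W i : Set (Fin 3 → ℝ)))ᶜ := by
      have := aux_dense_compl W hWne
      obtain ⟨x, hx, -⟩ := this.exists_mem_open isOpen_univ ⟨0, trivial⟩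
      exact ⟨x, hx⟩
    have hbW : ∀ i, b ∉ W i := by
      intro i hi
      exact hb (Set.mem_iUnion.mpr ⟨i, hi⟩)
    -- transport a₁ → b
    have hseg1 : ∀ t ∈ Set.Icc (0:ℝ) 1, (1-t) • a₁ + t • b ∉ S :=
      seg_avoid a₁ b ha₁S (fun j => hbW (Sum.inl j))
    have hseg2 : ∀ t ∈ Set.Icc (0:ℝ) 1, (1-t) • p + t • b ∉ S :=
      seg_avoid p b hp (fun j => hbW (Sum.inr j))
    have hbPD : (M.map (MvPolynomial.eval b)).PosDef :=
      transport a₁ b (fun t ht => hSdet _ (hseg1 t ht)) ha₁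
    refine transport b p (fun t ht => hSdet _ ?_) hbPD
    have h1t : (1:ℝ) - t ∈ Set.Icc (0:ℝ) 1 := by
      obtain ⟨h1, h2⟩ := ht
      exact Set.mem_Icc.mpr ⟨by linarith, by linarith⟩
    have := hseg2 (1-t) h1t
    have heq : (1 - (1-t)) • p + (1-t) • b = (1-t) • b + t • p := by
      rw [sub_sub_cancel]
      exact add_comm _ _
    rwa [heq] at this
  -- conclude: positive semidefinite everywhere by density
  intro a
  refine posSemidef_iff_dotProduct_mulVec.mpr ⟨herm a, fun x => ?_⟩
  have hset : Sᶜ ⊆ {b : Fin 3 → ℝ | 0 ≤ q b x} := by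
    intro b hb
    rcases eq_or_ne x 0 with hx | hx
    · simp [hq, hx]
    · exact le_of_lt ((pd_iff b).mp (hPD b hb) x hx)
  have hcl : IsClosed {b : Fin 3 → ℝ | 0 ≤ q b x} :=
    isClosed_le continuous_const (qc x)
  have : a ∈ {b : Fin 3 → ℝ | 0 ≤ q b x} := by
    have h1 : closure Sᶜ ⊆ {b : Fin 3 → ℝ | 0 ≤ q b x} := closure_minimal hset hcl
    have h2 : a ∈ closure Sᶜ := by rw [hSdense.closure_eq]; trivial
    exact h1 h2
  simpa [hq, star_trivial] using this
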